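/- A group-separable profile over m alternatives contains at most 2^(m−1) pairwise distinct votes, and this bound is tight: for every m ≥ 2 there is a group-separable profile over m alternatives containing exactly 2^(m−1) distinct votes. -/

import Mathlib

/-- A vote (linear order) over a finite set `A`, encoded as a ranking:
`v a < v b` means `a` is strictly preferred to `b`. -/
abbrev Vote (A : Type*) [Fintype A] := A ≃ Fin (Fintype.card A)

/-- `P` is group-separable: for every subset `A'` of the alternatives with at
least two elements, there is a nonempty proper subset `B` of `A'` such that
every voter ranks all of `B` above all of `A' \ B`, or all of `A' \ B` above
all of `B`. -/
def GroupSeparable {A : Type*} [Fintype A] [DecidableEq A] {n : ℕ}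
    (P : Fin n → Vote A) : Prop :=
  ∀ A' : Finset A, 2 ≤ A'.card →
    ∃ B : Finset A, B ⊆ A' ∧ B.Nonempty ∧ B ≠ A' ∧
      ∀ i : Fin n,
        (∀ a ∈ B, ∀ b ∈ A' \ B, P i a < P i b) ∨
        (∀ a ∈ B, ∀ b ∈ A' \ B, P i b < P i a)

section UpperBound

variable {A : Type*} [Fintype A] [DecidableEq A]

/-- The rank of `a` inside `A'` according to vote `v` (0 outside `A'`). -/
def rkF (v : Vote A) (A' : Finset A) (a : A) : ℕ :=
  if a ∈ A' then (A'.filter (fun b => v b < v a)).card else 0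

lemma ncard_prod_helper {α β : Type*} (s : Set α) (t : Set β) :
    (s ×ˢ t).ncard = s.ncard * t.ncard := by
  rw [← Nat.card_coe_set_eq, ← Nat.card_coe_set_eq, ← Nat.card_coe_set_eq,
    ← Nat.card_prod]
  exact Nat.card_congr (Equiv.Set.prod s t)

/-- Whether vote `v` puts all of `B` above all of `C`. -/
def bitOf (v : Vote A) (B C : Finset A) : Bool := decide (∀ a ∈ B, ∀ b ∈ C, v a < v b)

def combineF (B C : Finset A) (f g : A → ℕ) (o : Bool) (a : A) : ℕ :=
  if a ∈ B then f a + (if o then 0 else C.card)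
  else if a ∈ C then g a + (if o then B.card else 0) else 0

lemma combine_eq (v : Vote A) (A' B : Finset A) (hBsub : B ⊆ A')
    (hdisj : (∀ a ∈ B, ∀ b ∈ A' \ B, v a < v b) ∨ (∀ a ∈ B, ∀ b ∈ A' \ B, v b < v a)) :
    rkF v A' = fun a =>
      combineF B (A' \ B) (rkF v B) (rkF v (A' \ B)) (bitOf v B (A' \ B)) a := by
  classical
  set C : Finset A := A' \ B with hCdef
  have hunion : B ∪ C = A' := Finset.union_sdiff_of_subset hBsub
  have hdis : Disjoint B C := Finset.disjoint_sdiff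
  have hsplit : ∀ a ∈ A', rkF v A' a =
      (B.filter (fun b => v b < v a)).card + (C.filter (fun b => v b < v a)).card := by
    intro a ha
    simp only [rkF, if_pos ha]
    rw [← hunion, Finset.filter_union,
      Finset.card_union_of_disjoint (Finset.disjoint_filter_filter hdis)]
  have hbitcases : (bitOf v B C = true ∧ ∀ a ∈ B, ∀ b ∈ C, v a < v b)
      ∨ (bitOf v B C = false ∧ ∀ a ∈ B, ∀ b ∈ C, v b < v a) := by
    by_cases hb : ∀ a ∈ B, ∀ b ∈ C, v a < v b
    · exact Or.inl ⟨by unfold bitOf; exact decide_eq_true hb, hb⟩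
    · rcases hdisj with h | h
      · exact absurd h hb
      · exact Or.inr ⟨by unfold bitOf; exact decide_eq_false hb, h⟩
  funext a
  rcases hbitcases with ⟨hbit, hab⟩ | ⟨hbit, hab⟩
  · -- B above C
    by_cases haB : a ∈ B
    · have haA : a ∈ A' := hBsub haB
      have hCempty : C.filter (fun b => v b < v a) = ∅ :=
        Finset.filter_eq_empty_iff.mpr (fun {b} hb => not_lt_of_gt (hab a haB b hb))
      simp only [combineF, hbit, if_pos haB, if_true]
      rw [hsplit a haA, hCempty]
      simp [rkF, haB]
    · by_cases haC : a ∈ C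
      · have haA : a ∈ A' := (Finset.mem_sdiff.mp haC).1
        have hBfull : B.filter (fun b => v b < v a) = B :=
          Finset.filter_eq_self.mpr (fun b hb => hab b hb a haC)
        simp only [combineF, hbit, if_neg haB, if_pos haC, if_true]
        rw [hsplit a haA, hBfull]
        simp [rkF, haC, Nat.add_comm]
      · have haA : a ∉ A' := by
          intro h; rcases Finset.mem_union.mp (hunion ▸ h) with h' | h' <;> tauto
        simp [combineF, rkF, haA, haB, haC]
  · -- C above B
    by_cases haB : a ∈ B
    · have haA : a ∈ A' := hBsub haB
      have hCfull : C.filter (fun b => v b < v a) = C :=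
        Finset.filter_eq_self.mpr (fun b hb => hab a haB b hb)
      simp only [combineF, hbit, if_pos haB, if_false]
      rw [hsplit a haA, hCfull]
      simp [rkF, haB]
    · by_cases haC : a ∈ C
      · have haA : a ∈ A' := (Finset.mem_sdiff.mp haC).1
        have hBempty : B.filter (fun b => v b < v a) = ∅ :=
          Finset.filter_eq_empty_iff.mpr (fun {b} hb => not_lt_of_gt (hab b hb a haC))
        simp only [combineF, hbit, if_neg haB, if_pos haC, if_false]
        rw [hsplit a haA, hBempty]
        simp [rkF, haC]
      · have haA : a ∉ A' := by
          intro h; rcases Finset.mem_union.mp (hunion ▸ h) with h' | h' <;> tauto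
        simp [combineF, rkF, haA, haB, haC]

lemma ub_small {n : ℕ} (P : Fin n → Vote A) (A' : Finset A) (h1 : A'.card ≤ 1) :
    ((fun v => rkF v A') '' Set.range P).ncard ≤ 2 ^ (A'.card - 1) := by
  have hz : ∀ v : Vote A, rkF v A' = fun _ => (0 : ℕ) := by
    intro v; funext a
    unfold rkF
    split_ifs with h
    · have he : A'.filter (fun b => v b < v a) = ∅ := by
        rw [Finset.filter_eq_empty_iff]
        intro b hb
        have hba : b = a := by
          by_contra hne
          have : 1 < A'.card := Finset.one_lt_card.mpr ⟨a, h, b, hb, Ne.symm hne⟩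
          omega
        simp [hba]
      simp [he]
    · rfl
  have hsub : ((fun v => rkF v A') '' Set.range P) ⊆ {fun _ => (0 : ℕ)} := by
    rintro _ ⟨v, -, rfl⟩; exact hz v
  calc ((fun v => rkF v A') '' Set.range P).ncard
      ≤ ({fun _ => (0 : ℕ)} : Set (A → ℕ)).ncard :=
        Set.ncard_le_ncard hsub (Set.finite_singleton _)
    _ = 1 := Set.ncard_singleton _
    _ ≤ 2 ^ (A'.card - 1) := Nat.one_le_two_pow

lemma ub_aux {n : ℕ} (P : Fin n → Vote A) (hP : GroupSeparable P) :
    ∀ (k : ℕ) (A' : Finset A), A'.card ≤ k →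
      ((fun v => rkF v A') '' Set.range P).ncard ≤ 2 ^ (A'.card - 1) := by
  intro k
  induction k with
  | zero => intro A' h; exact ub_small P A' (by omega)
  | succ k ih =>
    intro A' hA'
    by_cases h1 : A'.card ≤ 1
    · exact ub_small P A' h1
    · obtain ⟨B, hBsub, hBne, hBneq, hsep⟩ := hP A' (by omega)
      set C : Finset A := A' \ B with hCdef
      have hBle : B.card ≤ A'.card := Finset.card_le_card hBsub
      have hCcard : C.card = A'.card - B.card := Finset.card_sdiff_of_subset hBsub
      have hB1 : 1 ≤ B.card := Finset.card_pos.mpr hBne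
      have hBlt : B.card < A'.card :=
        Finset.card_lt_card (Finset.ssubset_iff_subset_ne.mpr ⟨hBsub, hBneq⟩)
      have hC1 : 1 ≤ C.card := by omega
      have hfinP : (Set.range P).Finite := Set.finite_range P
      have hfinB : (((fun v => rkF v B) '' Set.range P)).Finite := hfinP.image _
      have hfinC : (((fun v => rkF v C) '' Set.range P)).Finite := hfinP.image _
      have hfinprod : ((((fun v => rkF v B) '' Set.range P)) ×ˢ
          ((((fun v => rkF v C) '' Set.range P)) ×ˢ (Set.univ : Set Bool))).Finite :=
        hfinB.prod (hfinC.prod Set.finite_univ)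
      have hsubset : ((fun v => rkF v A') '' Set.range P) ⊆
          (fun p : (A → ℕ) × (A → ℕ) × Bool => fun a => combineF B C p.1 p.2.1 p.2.2 a) ''
            ((((fun v => rkF v B) '' Set.range P)) ×ˢ
              ((((fun v => rkF v C) '' Set.range P)) ×ˢ (Set.univ : Set Bool))) := by
        rintro _ ⟨v, ⟨i, rfl⟩, rfl⟩
        refine ⟨(rkF (P i) B, rkF (P i) C, bitOf (P i) B C), ?_, ?_⟩
        · exact ⟨⟨P i, ⟨i, rfl⟩, rfl⟩, ⟨P i, ⟨i, rfl⟩, rfl⟩, trivial⟩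
        · exact (combine_eq (P i) A' B hBsub (hsep i)).symm
      calc ((fun v => rkF v A') '' Set.range P).ncard
          ≤ _ := Set.ncard_le_ncard hsubset (hfinprod.image _)
        _ ≤ _ := Set.ncard_image_le hfinprod
        _ = (((fun v => rkF v B) '' Set.range P)).ncard *
            ((((fun v => rkF v C) '' Set.range P)).ncard * 2) := by
            rw [ncard_prod_helper, ncard_prod_helper, Set.ncard_univ]
            simp [Nat.card_eq_fintype_card]
        _ ≤ 2 ^ (B.card - 1) * (2 ^ (C.card - 1) * 2) :=
            Nat.mul_le_mul (ih B (by omega)) (Nat.mul_le_mul (ih C (by omega)) le_rfl)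
        _ = 2 ^ (A'.card - 1) := by
            rw [← pow_succ, ← pow_add]
            congr 1
            omega

lemma rk_univ (v : Vote A) (a : A) : rkF v Finset.univ a = (v a : ℕ) := by
  unfold rkF
  rw [if_pos (Finset.mem_univ a)]
  have himg : (Finset.univ.filter (fun b => v b < v a)) =
      (Finset.univ.filter (fun j : Fin (Fintype.card A) => j < v a)).image v.symm := by
    ext b
    simp only [Finset.mem_filter, Finset.mem_univ, true_and, Finset.mem_image]
    constructor
    · intro h; exact ⟨v b, h, v.symm_apply_apply b⟩
    · rintro ⟨j, hj, rfl⟩; simpa using hj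
  rw [himg, Finset.card_image_of_injective _ v.symm.injective]
  have hiio : Finset.univ.filter (fun j : Fin (Fintype.card A) => j < v a) = Finset.Iio (v a) := by
    ext j; simp
  rw [hiio, Fin.card_Iio]

lemma ub_final {n : ℕ} (P : Fin n → Vote A) (hP : GroupSeparable P) :
    (Set.range P).ncard ≤ 2 ^ (Fintype.card A - 1) := by
  have key := ub_aux P hP (Finset.univ : Finset A).card Finset.univ le_rfl
  rw [Finset.card_univ] at key
  have hinj : Set.InjOn (fun v => rkF v (Finset.univ : Finset A)) (Set.range P) := by
    intro v _ w _ h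
    apply Equiv.ext
    intro a
    have h1 : rkF v Finset.univ a = rkF w Finset.univ a := congrFun h a
    rw [rk_univ, rk_univ] at h1
    exact Fin.val_injective h1
  calc (Set.range P).ncard
      = ((fun v => rkF v (Finset.univ : Finset A)) '' Set.range P).ncard :=
        (Set.ncard_image_of_injOn hinj).symm
    _ ≤ 2 ^ (Fintype.card A - 1) := key

end UpperBound

section Tight

/-- Number of `true`s below `i`. -/
def tcnt (t : ℕ → Bool) (i : ℕ) : ℕ := ((Finset.range i).filter (fun j => t j)).card

/-- Position of alternative `i` in the vote determined by the sign vector `t`. -/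
def posn (m : ℕ) (t : ℕ → Bool) (i : ℕ) : ℕ := tcnt t i + (if t i then 0 else m - 1 - i)

lemma tcnt_le (t : ℕ → Bool) (i : ℕ) : tcnt t i ≤ i := by
  calc tcnt t i ≤ (Finset.range i).card := Finset.card_filter_le _ _
    _ = i := Finset.card_range i

lemma tcnt_mono (t : ℕ → Bool) {i j : ℕ} (h : i ≤ j) : tcnt t i ≤ tcnt t j :=
  Finset.card_le_card (Finset.filter_subset_filter _ (Finset.range_subset_range.mpr h))

lemma tcnt_lt_of_true (t : ℕ → Bool) {i j : ℕ} (hij : i < j) (h : t i = true) :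
    tcnt t i < tcnt t j := by
  have hnot : i ∉ (Finset.range i).filter (fun j => t j) := by simp
  have h1 : tcnt t (i + 1) = tcnt t i + 1 := by
    unfold tcnt
    rw [Finset.range_add_one, Finset.filter_insert, if_pos h, Finset.card_insert_of_notMem hnot]
  have h2 : tcnt t (i + 1) ≤ tcnt t j := tcnt_mono t hij
  omega

lemma tcnt_le_of_false (t : ℕ → Bool) {i j : ℕ} (hij : i < j) (h : t i = false) :
    tcnt t j ≤ tcnt t i + (j - i - 1) := by
  have hsplit : tcnt t j = tcnt t i + ((Finset.Ico i j).filter (fun x => t x)).card := by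
    unfold tcnt
    rw [Finset.range_eq_Ico, Finset.range_eq_Ico,
      ← Finset.card_union_of_disjoint
        (Finset.disjoint_filter_filter (Finset.Ico_disjoint_Ico_consecutive 0 i j)),
      ← Finset.filter_union, Finset.Ico_union_Ico_eq_Ico (Nat.zero_le i) (le_of_lt hij)]
  have hsub : (Finset.Ico i j).filter (fun x => t x) ⊆ Finset.Ico (i + 1) j := by
    intro x hx
    simp only [Finset.mem_filter, Finset.mem_Ico] at hx ⊢
    rcases hx with ⟨⟨hx1, hx2⟩, hxt⟩
    have : x ≠ i := by rintro rfl; rw [h] at hxt; exact Bool.false_ne_true hxt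
    omega
  have hc := Finset.card_le_card hsub
  rw [Nat.card_Ico] at hc
  omega

lemma posn_lt_of_true (m : ℕ) (t : ℕ → Bool) {i j : ℕ} (hij : i < j) (h : t i = true) :
    posn m t i < posn m t j := by
  have h1 := tcnt_lt_of_true t hij h
  have e1 : posn m t i = tcnt t i := by simp [posn, h]
  have e2 : tcnt t j ≤ posn m t j := Nat.le_add_right _ _
  omega

lemma posn_lt_of_false (m : ℕ) (t : ℕ → Bool) {i j : ℕ} (hij : i < j) (hj : j < m)
    (h : t i = false) : posn m t j < posn m t i := by
  have e1 : posn m t i = tcnt t i + (m - 1 - i) := by simp [posn, h]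
  have e2 : posn m t j ≤ tcnt t j + (m - 1 - j) := by
    unfold posn; split_ifs <;> omega
  have e3 := tcnt_le_of_false t hij h
  omega

lemma posn_lt_m (m : ℕ) (t : ℕ → Bool) {i : ℕ} (hi : i < m) : posn m t i < m := by
  have h1 := tcnt_le t i
  unfold posn; split_ifs <;> omega

lemma posn_ne (m : ℕ) (t : ℕ → Bool) {i j : ℕ} (hij : i < j) (hj : j < m) :
    posn m t i ≠ posn m t j := by
  cases hti : t i
  · exact (posn_lt_of_false m t hij hj hti).ne'
  · exact (posn_lt_of_true m t hij hti).ne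

/-- Extend a sign vector on `Fin (m-1)` to `ℕ`. -/
def tOf (m : ℕ) (s : Fin (m - 1) → Bool) : ℕ → Bool :=
  fun j => if h : j < m - 1 then s ⟨j, h⟩ else false

/-- The "caterpillar" vote determined by the sign vector `s`. -/
noncomputable def pvote (m : ℕ) (s : Fin (m - 1) → Bool) : Vote (Fin m) :=
  (Equiv.ofBijective
    (fun i : Fin m => (⟨posn m (tOf m s) i, posn_lt_m m _ i.isLt⟩ : Fin m))
    (Finite.injective_iff_bijective.mp (by
      intro i j hij
      by_contra hne
      have hne' : (i : ℕ) ≠ (j : ℕ) := fun h => hne (Fin.val_injective h)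
      have heq : posn m (tOf m s) i = posn m (tOf m s) j := congrArg Fin.val hij
      rcases lt_or_gt_of_ne hne' with h | h
      · exact posn_ne m _ h j.isLt heq
      · exact posn_ne m _ h i.isLt heq.symm))).trans (finCongr (Fintype.card_fin m).symm)

lemma pvote_val (m : ℕ) (s : Fin (m - 1) → Bool) (a : Fin m) :
    ((pvote m s) a : ℕ) = posn m (tOf m s) a := rfl

lemma pvote_lt_iff (m : ℕ) (s : Fin (m - 1) → Bool) (a b : Fin m) :
    pvote m s a < pvote m s b ↔ posn m (tOf m s) a < posn m (tOf m s) b := by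
  rw [Fin.lt_def, pvote_val, pvote_val]

lemma pvote_injective (m : ℕ) (hm : 2 ≤ m) : Function.Injective (pvote m) := by
  intro s s' h
  funext j
  have hval : ∀ a : Fin m, posn m (tOf m s) a = posn m (tOf m s') a := by
    intro a; rw [← pvote_val, ← pvote_val, h]
  have hj1 : (j : ℕ) < m - 1 := j.isLt
  have hjm : (j : ℕ) < m := by omega
  have hj1m : (j : ℕ) + 1 < m := by omega
  have h1 : posn m (tOf m s) (j : ℕ) = posn m (tOf m s') (j : ℕ) := hval ⟨(j : ℕ), hjm⟩
  have h2 : posn m (tOf m s) ((j : ℕ) + 1) = posn m (tOf m s') ((j : ℕ) + 1) :=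
    hval ⟨(j : ℕ) + 1, hj1m⟩
  have ht : tOf m s (j : ℕ) = s j := by simp [tOf, hj1]
  have ht' : tOf m s' (j : ℕ) = s' j := by simp [tOf, hj1]
  by_contra hne
  cases hsj : s j
  · have hs'j : s' j = true := by
      cases hs'j : s' j
      · rw [hsj, hs'j] at hne; exact absurd rfl hne
      · rfl
    have k1 := posn_lt_of_false m (tOf m s) (by omega : (j : ℕ) < (j : ℕ) + 1) hj1m (ht.trans hsj)
    have k2 := posn_lt_of_true m (tOf m s') (by omega : (j : ℕ) < (j : ℕ) + 1) (ht'.trans hs'j)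
    omega
  · have hs'j : s' j = false := by
      cases hs'j : s' j
      · rfl
      · rw [hsj, hs'j] at hne; exact absurd rfl hne
    have k1 := posn_lt_of_true m (tOf m s) (by omega : (j : ℕ) < (j : ℕ) + 1) (ht.trans hsj)
    have k2 := posn_lt_of_false m (tOf m s') (by omega : (j : ℕ) < (j : ℕ) + 1) hj1m (ht'.trans hs'j)
    omega

end Tight

/-- A group-separable profile over `m` alternatives contains at most `2^(m-1)`
pairwise distinct votes, and this bound is tight: for every `m ≥ 2` there is a
group-separable profile over `m` alternatives with exactly `2^(m-1)` distinct
votes. -/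
theorem groupSeparable_distinct_votes_bound :
    (∀ (A : Type) [Fintype A] [DecidableEq A] (n : ℕ) (P : Fin n → Vote A),
      GroupSeparable P → Set.ncard (Set.range P) ≤ 2 ^ (Fintype.card A - 1)) ∧
    (∀ m : ℕ, 2 ≤ m → ∃ (n : ℕ) (P : Fin n → Vote (Fin m)),
      GroupSeparable P ∧ Set.ncard (Set.range P) = 2 ^ (m - 1)) := by
  constructor
  · intro A _ _ n P hP
    exact ub_final P hP
  · intro m hm
    classical
    have hcard : Fintype.card (Fin (m - 1) → Bool) = 2 ^ (m - 1) := by simp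
    set e := (Fintype.equivFinOfCardEq hcard).symm with he
    refine ⟨2 ^ (m - 1), fun i => pvote m (e i), ?_, ?_⟩
    · intro A' hA'
      have hne : A'.Nonempty := Finset.card_pos.mp (by omega)
      set a0 := A'.min' hne with ha0
      refine ⟨{a0}, ?_, Finset.singleton_nonempty _, ?_, ?_⟩
      · simpa using A'.min'_mem hne
      · intro h
        rw [← h] at hA'
        simp at hA'
      · intro i
        set s := e i with hs
        have hlt : ∀ b ∈ A' \ {a0}, (a0 : ℕ) < (b : ℕ) := by
          intro b hb
          rcases Finset.mem_sdiff.mp hb with ⟨hbA, hbne⟩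
          have h1 : a0 ≤ b := A'.min'_le b hbA
          have h2 : a0 ≠ b := by simpa [eq_comm] using hbne
          exact lt_of_le_of_ne h1 (fun hh => h2 (Fin.val_injective hh))
        cases hta : tOf m s (a0 : ℕ)
        · right
          intro a ha b hb
          have haa : a = a0 := by simpa using ha
          subst haa
          rw [pvote_lt_iff]
          exact posn_lt_of_false m (tOf m s) (hlt b hb) b.isLt hta
        · left
          intro a ha b hb
          have haa : a = a0 := by simpa using ha
          subst haa
          rw [pvote_lt_iff]
          exact posn_lt_of_true m (tOf m s) (hlt b hb) hta
    · have hrange : Set.range (fun i => pvote m (e i)) = Set.range (pvote m) := by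
        have : (fun i => pvote m (e i)) = (pvote m) ∘ e := rfl
        rw [this, Set.range_comp, Equiv.range_eq_univ, Set.image_univ]
      rw [hrange, ← Nat.card_coe_set_eq,
        Nat.card_range_of_injective (pvote_injective m hm), Nat.card_eq_fintype_card, hcard]
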